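/- For every integer k ≥ 3, there exist tournaments on arbitrarily many vertices that are strongly (5k−1)-connected but are not 2k-linked. -/

import Mathlib

/-- A tournament: a loopless digraph on a finite vertex set in which, for every pair of
distinct vertices `x, y`, exactly one of the edges `(x,y)`, `(y,x)` is present. -/
def IsTournament {V : Type} (G : V → V → Prop) : Prop :=
  (∀ v, ¬ G v v) ∧ ∀ x y : V, x ≠ y → (G x y ↔ ¬ G y x)

/-- A directed path: a nonempty list of pairwise distinct vertices in which consecutive
vertices are joined by a directed edge. -/
def IsDipath {V : Type} (G : V → V → Prop) (p : List V) : Prop :=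
  p ≠ [] ∧ p.Nodup ∧ p.Chain' G

/-- The out-degree of a vertex. -/
noncomputable def outDeg {V : Type} (G : V → V → Prop) (v : V) : ℕ := {u | G v u}.ncard

/-- The in-degree of a vertex. -/
noncomputable def inDeg {V : Type} (G : V → V → Prop) (v : V) : ℕ := {u | G u v}.ncard

/-- A digraph is strongly `k`-connected if it has at least `k+1` vertices and, after removing
any set `S` of at most `k-1` vertices, any vertex can reach any other by a directed path
avoiding `S`. -/
def StronglyKConnected {V : Type} [Fintype V] (G : V → V → Prop) (k : ℕ) : Prop :=
  k + 1 ≤ Fintype.card V ∧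
  ∀ S : Set V, S.ncard ≤ k - 1 → ∀ x y : V, x ∉ S → y ∉ S → x ≠ y →
    ∃ p : List V, IsDipath G p ∧ p.head? = some x ∧ p.getLast? = some y ∧ ∀ v ∈ p, v ∉ S

/-- A digraph is `k`-linked if it has at least `2k` vertices and for any `2k` distinct
vertices `x₁, …, x_k, y₁, …, y_k` there are pairwise vertex-disjoint directed paths
`P₁, …, P_k` with `P i` starting at `x i` and ending at `y i`. -/
def KLinked {V : Type} [Fintype V] (G : V → V → Prop) (k : ℕ) : Prop :=
  2 * k ≤ Fintype.card V ∧
  ∀ x y : Fin k → V, Function.Injective (Sum.elim x y : Fin k ⊕ Fin k → V) →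
    ∃ P : Fin k → List V,
      (∀ i, IsDipath G (P i) ∧ (P i).head? = some (x i) ∧ (P i).getLast? = some (y i)) ∧
      ∀ i j, i ≠ j → ∀ v ∈ P i, v ∉ P j

namespace FiveK

def cyc (k : ℕ) (i j : Fin k) : Prop :=
  (i.val < j.val ∧ ¬(i.val = 0 ∧ j.val = k-1)) ∨ (i.val = k-1 ∧ j.val = 0)

abbrev V (k f : ℕ) : Type :=
  (Fin 3 × Fin f) ⊕ (Fin (2*k-1) ⊕ ((Fin k ⊕ Fin k) ⊕ (Fin k ⊕ Fin k)))

variable {k f : ℕ}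

def vT (c : Fin 3) (i : Fin f) : V k f := Sum.inl (c, i)
def vZ (z : Fin (2*k-1)) : V k f := Sum.inr (Sum.inl z)
def vA (m : Fin k) : V k f := Sum.inr (Sum.inr (Sum.inl (Sum.inl m)))
def vB (m : Fin k) : V k f := Sum.inr (Sum.inr (Sum.inl (Sum.inr m)))
def vC (m : Fin k) : V k f := Sum.inr (Sum.inr (Sum.inr (Sum.inl m)))
def vE (m : Fin k) : V k f := Sum.inr (Sum.inr (Sum.inr (Sum.inr m)))

def G (k f : ℕ) : V k f → V k f → Prop
  | .inl (c, i), .inl (c', j) => if c = c' then i.val < j.val else c' = c + 1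
  | .inl (c, _), .inr (.inl _) => c ≠ 1
  | .inr (.inl _), .inl (c, _) => c = 1
  | .inl _, .inr (.inr (.inl (.inl _))) => True
  | .inr (.inr (.inl (.inl _))), .inl _ => False
  | .inl (c, _), .inr (.inr (.inl (.inr _))) => c ≠ 1
  | .inr (.inr (.inl (.inr _))), .inl (c, _) => c = 1
  | .inl (c, _), .inr (.inr (.inr (.inl _))) => c ≠ 1
  | .inr (.inr (.inr (.inl _))), .inl (c, _) => c = 1
  | .inl _, .inr (.inr (.inr (.inr _))) => False
  | .inr (.inr (.inr (.inr _))), .inl _ => True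
  | .inr (.inl z), .inr (.inl z') => z.val < z'.val
  | .inr (.inl _), .inr (.inr (.inl (.inl _))) => False
  | .inr (.inr (.inl (.inl _))), .inr (.inl _) => True
  | .inr (.inl _), .inr (.inr (.inl (.inr _))) => False
  | .inr (.inr (.inl (.inr _))), .inr (.inl _) => True
  | .inr (.inl _), .inr (.inr (.inr (.inl _))) => True
  | .inr (.inr (.inr (.inl _))), .inr (.inl _) => False
  | .inr (.inl _), .inr (.inr (.inr (.inr _))) => True
  | .inr (.inr (.inr (.inr _))), .inr (.inl _) => False
  | .inr (.inr (.inl (.inl m))), .inr (.inr (.inl (.inl m'))) => cyc k m m'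
  | .inr (.inr (.inl (.inl _))), .inr (.inr (.inl (.inr _))) => True
  | .inr (.inr (.inl (.inr _))), .inr (.inr (.inl (.inl _))) => False
  | .inr (.inr (.inl (.inl m))), .inr (.inr (.inr (.inl i))) => m ≠ i
  | .inr (.inr (.inr (.inl i))), .inr (.inr (.inl (.inl m))) => i = m
  | .inr (.inr (.inl (.inl _))), .inr (.inr (.inr (.inr _))) => True
  | .inr (.inr (.inr (.inr _))), .inr (.inr (.inl (.inl _))) => False
  | .inr (.inr (.inl (.inr i))), .inr (.inr (.inl (.inr j))) => i.val < j.val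
  | .inr (.inr (.inl (.inr _))), .inr (.inr (.inr (.inl _))) => True
  | .inr (.inr (.inr (.inl _))), .inr (.inr (.inl (.inr _))) => False
  | .inr (.inr (.inl (.inr j))), .inr (.inr (.inr (.inr i))) => j ≠ i
  | .inr (.inr (.inr (.inr i))), .inr (.inr (.inl (.inr j))) => i = j
  | .inr (.inr (.inr (.inl i))), .inr (.inr (.inr (.inl j))) => i.val < j.val
  | .inr (.inr (.inr (.inl _))), .inr (.inr (.inr (.inr _))) => True
  | .inr (.inr (.inr (.inr _))), .inr (.inr (.inr (.inl _))) => False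
  | .inr (.inr (.inr (.inr i))), .inr (.inr (.inr (.inr j))) => cyc k i j

lemma val_lt_asymm {n : ℕ} {a b : Fin n} (h : a ≠ b) : (a.val < b.val ↔ ¬ b.val < a.val) := by
  have := Fin.val_injective.ne h; omega

lemma fin3_asymm : ∀ c c' : Fin 3, c ≠ c' → ((c' = c + 1) ↔ ¬ (c = c' + 1)) := by decide

lemma cyc_asymm (hk : 2 ≤ k) (i j : Fin k) (hij : i ≠ j) : cyc k i j ↔ ¬ cyc k j i := by
  have hi := i.isLt; have hj := j.isLt
  have hv : i.val ≠ j.val := fun h => hij (Fin.ext h)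
  simp only [cyc]; omega

lemma cyc_irrefl (hk : 2 ≤ k) (i : Fin k) : ¬ cyc k i i := by
  have hi := i.isLt; simp only [cyc]; omega

theorem tournament (hk : 2 ≤ k) : IsTournament (G k f) := by
  constructor
  · rintro (⟨c, i⟩ | (z | ((m | m) | (m | m)))) <;>
      simp [G, cyc_irrefl hk]
  · rintro (⟨c, i⟩ | (z | ((m | m) | (m | m)))) (⟨c', j⟩ | (z' | ((m' | m') | (m' | m')))) hne <;>
      simp only [G, ne_eq, Sum.inl.injEq, Sum.inr.injEq, Prod.mk.injEq, not_and] at hne ⊢ <;>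
      try tauto
    case right.inl.inl =>
      by_cases hc : c = c'
      · subst hc
        simp only [if_pos rfl]
        exact val_lt_asymm (fun h => hne rfl h)
      · rw [if_neg hc, if_neg (Ne.symm hc)]
        exact fin3_asymm c c' hc
    all_goals
      first
      | exact cyc_asymm hk _ _ hne
      | exact val_lt_asymm hne



section Infra

variable {α : Type*}

lemma rtg_walk {r : α → α → Prop} {P : α → Prop} (hr : ∀ {x y}, r x y → P y) :
    ∀ {a b : α}, Relation.ReflTransGen r a b → P a →
    ∃ l : List α, l ≠ [] ∧ l.Chain' r ∧ l.head? = some a ∧ l.getLast? = some b ∧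
      ∀ v ∈ l, P v := by
  intro a b h ha
  induction h with
  | refl => exact ⟨[a], by simp, List.isChain_singleton a, by simp, by simp, by simpa using ha⟩
  | @tail b' c hab hbc ih =>
    obtain ⟨l, hne, hc, hh, hl, hP⟩ := ih
    refine ⟨l ++ [c], by simp, ?_, ?_, ?_, ?_⟩
    · refine List.isChain_append.mpr ⟨hc, List.isChain_singleton c, ?_⟩
      intro x hx y hy
      simp only [List.head?_cons, Option.mem_def, Option.some.injEq] at hy
      rw [hl] at hx
      simp only [Option.mem_def, Option.some.injEq] at hx
      subst hx; subst hy; exact hbc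
    · rcases l with _ | ⟨w, l'⟩
      · exact absurd rfl hne
      · simpa using hh
    · simp [List.getLast?_concat]
    · intro v hv
      rcases List.mem_append.mp hv with h1 | h2
      · exact hP v h1
      · simp only [List.mem_singleton] at h2; subst h2; exact hr hbc

lemma walk_dedup {r : α → α → Prop} :
    ∀ l : List α, l ≠ [] → l.Chain' r →
    ∃ q : List α, q ≠ [] ∧ q.Nodup ∧ q.Chain' r ∧ q.head? = l.head? ∧
      q.getLast? = l.getLast? ∧ ∀ v ∈ q, v ∈ l := by
  intro l
  induction l with
  | nil => intro h; exact absurd rfl h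
  | cons x xs ih =>
    intro _ hc
    rcases xs with _ | ⟨y, ys⟩
    · exact ⟨[x], by simp, by simp, List.isChain_singleton x, by simp, by simp, by simp⟩
    · have hc2 := (List.isChain_cons_cons.mp hc).2
      have hr1 := (List.isChain_cons_cons.mp hc).1
      obtain ⟨q, hqne, hqnd, hqc, hqh, hql, hqm⟩ := ih (by simp) hc2
      by_cases hx : x ∈ q
      · obtain ⟨s, t, rfl⟩ := List.append_of_mem hx
        refine ⟨x :: t, by simp, ?_, ?_, by simp, ?_, ?_⟩
        · have := hqnd
          exact (List.nodup_append.mp this).2.1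
        · exact (List.isChain_append.mp hqc).2.1
        · rw [List.getLast?_cons_cons] at *
          rw [← hql]
          exact (List.getLast?_append_of_ne_nil s (by simp)).symm
        · intro v hv
          have : v ∈ s ++ x :: t := by
            rcases List.mem_cons.mp hv with rfl | h
            · exact hx
            · exact List.mem_append.mpr (Or.inr (List.mem_cons_of_mem _ h))
          have := hqm v this
          exact List.mem_cons_of_mem _ this
      · refine ⟨x :: q, by simp, List.nodup_cons.mpr ⟨hx, hqnd⟩, ?_, by simp, ?_, ?_⟩
        · refine List.isChain_cons.mpr ⟨?_, hqc⟩
          intro z hz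
          rw [hqh] at hz
          simp only [List.head?_cons, Option.mem_def, Option.some.injEq] at hz
          subst hz; exact hr1
        · rw [List.getLast?_cons_cons, ← hql]
          rcases q with _ | ⟨w, q'⟩
          · exact absurd rfl hqne
          · simp [List.getLast?_cons_cons]
        · intro v hv
          rcases List.mem_cons.mp hv with rfl | h
          · exact List.mem_cons_self
          · exact List.mem_cons_of_mem _ (hqm v h)

end Infra


/-! ### Counting sets -/

variable (k f) in
def fsT (c : Fin 3) : Finset (V k f) := Finset.univ.image (fun i : Fin f => vT c i)
variable (k f) in
def fsZ : Finset (V k f) := Finset.univ.image (fun z : Fin (2*k-1) => vZ z)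
variable (k f) in
def fsA : Finset (V k f) := Finset.univ.image (fun m : Fin k => vA m)
variable (k f) in
def fsB : Finset (V k f) := Finset.univ.image (fun m : Fin k => vB m)
variable (k f) in
def fsC : Finset (V k f) := Finset.univ.image (fun m : Fin k => vC m)
variable (k f) in
def fsE : Finset (V k f) := Finset.univ.image (fun m : Fin k => vE m)

lemma vT_inj (c : Fin 3) : Function.Injective (vT (k := k) (f := f) c) := by
  intro a b h; simpa [vT] using h
lemma vZ_inj : Function.Injective (vZ (k := k) (f := f)) := by
  intro a b h; simpa [vZ] using h
lemma vA_inj : Function.Injective (vA (k := k) (f := f)) := by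
  intro a b h; simpa [vA] using h
lemma vB_inj : Function.Injective (vB (k := k) (f := f)) := by
  intro a b h; simpa [vB] using h
lemma vC_inj : Function.Injective (vC (k := k) (f := f)) := by
  intro a b h; simpa [vC] using h
lemma vE_inj : Function.Injective (vE (k := k) (f := f)) := by
  intro a b h; simpa [vE] using h

lemma card_fsT (c : Fin 3) : (fsT k f c).card = f := by
  rw [fsT, Finset.card_image_of_injective _ (vT_inj c)]; simp
lemma card_fsZ : (fsZ k f).card = 2*k-1 := by
  rw [fsZ, Finset.card_image_of_injective _ vZ_inj]; simp
lemma card_fsA : (fsA k f).card = k := by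
  rw [fsA, Finset.card_image_of_injective _ vA_inj]; simp
lemma card_fsB : (fsB k f).card = k := by
  rw [fsB, Finset.card_image_of_injective _ vB_inj]; simp
lemma card_fsC : (fsC k f).card = k := by
  rw [fsC, Finset.card_image_of_injective _ vC_inj]; simp
lemma card_fsE : (fsE k f).card = k := by
  rw [fsE, Finset.card_image_of_injective _ vE_inj]; simp

lemma mem_fsT (v : V k f) (c : Fin 3) : v ∈ fsT k f c ↔ ∃ i, v = vT c i := by
  simp [fsT, eq_comm]
lemma mem_fsZ (v : V k f) : v ∈ fsZ k f ↔ ∃ z, v = vZ z := by simp [fsZ, eq_comm]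
lemma mem_fsA (v : V k f) : v ∈ fsA k f ↔ ∃ m, v = vA m := by simp [fsA, eq_comm]
lemma mem_fsB (v : V k f) : v ∈ fsB k f ↔ ∃ m, v = vB m := by simp [fsB, eq_comm]
lemma mem_fsC (v : V k f) : v ∈ fsC k f ↔ ∃ m, v = vC m := by simp [fsC, eq_comm]
lemma mem_fsE (v : V k f) : v ∈ fsE k f ↔ ∃ m, v = vE m := by simp [fsE, eq_comm]

lemma exists_avoid (S : Set (V k f)) (T : Finset (V k f)) (h : S.ncard < T.card) :
    ∃ v ∈ T, v ∉ S := by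
  by_contra hcon
  push_neg at hcon
  have hsub : (↑T : Set (V k f)) ⊆ S := fun v hv => hcon v (by exact_mod_cast hv)
  have hle := Set.ncard_le_ncard hsub (Set.toFinite S)
  rw [Set.ncard_coe_finset] at hle
  omega

lemma avoid_of_subset (S : Set (V k f)) (T : Finset (V k f)) (hsub : (↑T : Set (V k f)) ⊆ S)
    (hS : S.ncard ≤ T.card) (v : V k f) (hv : v ∉ T) : v ∉ S := by
  intro hvS
  have hsub2 : (↑(insert v T) : Set (V k f)) ⊆ S := by
    intro w hw
    simp only [Finset.coe_insert, Set.mem_insert_iff] at hw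
    rcases hw with rfl | hw
    · exact hvS
    · exact hsub hw
  have hle := Set.ncard_le_ncard hsub2 (Set.toFinite S)
  rw [Set.ncard_coe_finset, Finset.card_insert_of_notMem hv] at hle
  omega

/-! ### successors/predecessors on the cyclic classes -/

def cycSucc {k : ℕ} (m : Fin k) : Fin k :=
  if h : m.val = k-1 then ⟨0, m.pos⟩ else ⟨m.val+1, by have := m.isLt; omega⟩

def cycPred {k : ℕ} (m : Fin k) : Fin k :=
  if h : m.val = 0 then ⟨k-1, by have := m.pos; omega⟩ else ⟨m.val-1, by have := m.isLt; omega⟩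

lemma cycSucc_spec (hk : 3 ≤ k) (m : Fin k) : cyc k m (cycSucc m) ∧ cycSucc m ≠ m := by
  have hlt := m.isLt
  have hval : (cycSucc m).val = if m.val = k-1 then 0 else m.val+1 := by
    unfold cycSucc; split <;> simp_all
  constructor
  · unfold cyc; rw [hval]; split <;> omega
  · intro he
    have hv := congrArg Fin.val he
    rw [hval] at hv
    split at hv <;> omega

lemma cycPred_spec (hk : 3 ≤ k) (m : Fin k) : cyc k (cycPred m) m ∧ cycPred m ≠ m := by
  have hlt := m.isLt
  have hval : (cycPred m).val = if m.val = 0 then k-1 else m.val-1 := by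
    unfold cycPred; split <;> simp_all
  constructor
  · unfold cyc; rw [hval]; split <;> omega
  · intro he
    have hv := congrArg Fin.val he
    rw [hval] at hv
    split at hv <;> omega


/-! ### edge lemmas -/

section Edges
variable {z z' : Fin (2*k-1)} {i j : Fin f} {m m' : Fin k} {c : Fin 3}

lemma gZT1 : G k f (vZ z) (vT 1 i) := by simp [G, vZ, vT]
lemma gBT1 : G k f (vB m) (vT 1 i) := by simp [G, vB, vT]
lemma gCT1 : G k f (vC m) (vT 1 i) := by simp [G, vC, vT]
lemma gET : G k f (vE m) (vT c i) := by simp [G, vE, vT]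
lemma gT0Z : G k f (vT 0 i) (vZ z) := by simp [G, vZ, vT]
lemma gT0B : G k f (vT 0 i) (vB m) := by simp [G, vB, vT]
lemma gT0C : G k f (vT 0 i) (vC m) := by simp [G, vC, vT]
lemma gTA : G k f (vT c i) (vA m) := by simp [G, vA, vT]
lemma gAZ : G k f (vA m) (vZ z) := by simp [G, vA, vZ]
lemma gAB : G k f (vA m) (vB m') := by simp [G, vA, vB]
lemma gAC (h : m ≠ m') : G k f (vA m) (vC m') := by simp [G, vA, vC]; exact h
lemma gAE : G k f (vA m) (vE m') := by simp [G, vA, vE]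
lemma gAA (h : cyc k m m') : G k f (vA m) (vA m') := by simp [G, vA]; exact h
lemma gZC : G k f (vZ z) (vC m) := by simp [G, vZ, vC]
lemma gZE : G k f (vZ z) (vE m) := by simp [G, vZ, vE]
lemma gBE (h : m ≠ m') : G k f (vB m) (vE m') := by simp [G, vB, vE]; exact h
lemma gCE : G k f (vC m) (vE m') := by simp [G, vC, vE]
lemma gEE (h : cyc k m m') : G k f (vE m) (vE m') := by simp [G, vE]; exact h

lemma g01 : G k f (vT 0 i) (vT 1 j) := by
  show G k f _ _; simp only [G, vT]; rw [if_neg (by decide)]; decide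
lemma g12 : G k f (vT 1 i) (vT 2 j) := by
  show G k f _ _; simp only [G, vT]; rw [if_neg (by decide)]; decide
lemma g20 : G k f (vT 2 i) (vT 0 j) := by
  show G k f _ _; simp only [G, vT]; rw [if_neg (by decide)]; decide

end Edges

/-! ### step relation and travel -/

variable (k f) in
def step (S : Set (V k f)) (u v : V k f) : Prop := G k f u v ∧ u ∉ S ∧ v ∉ S

variable (k f) in
abbrev RTG (S : Set (V k f)) : V k f → V k f → Prop := Relation.ReflTransGen (step k f S)

section Conn

variable (S : Set (V k f)) {i0 i1 i2 : Fin f}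

lemma travel (h0 : vT 0 i0 ∉ S) (h1 : vT 1 i1 ∉ S) (h2 : vT 2 i2 ∉ S) :
    ∀ (c : Fin 3) (i : Fin f), vT c i ∉ S → ∀ (c' : Fin 3) (j : Fin f), vT c' j ∉ S →
    RTG k f S (vT c i) (vT c' j) := by
  intro c i hi c' j hj
  fin_cases c <;> fin_cases c'
  · exact .head ⟨g01, hi, h1⟩ (.head ⟨g12, h1, h2⟩ (.single ⟨g20, h2, hj⟩))
  · exact .single ⟨g01, hi, hj⟩
  · exact .head ⟨g01, hi, h1⟩ (.single ⟨g12, h1, hj⟩)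
  · exact .head ⟨g12, hi, h2⟩ (.single ⟨g20, h2, hj⟩)
  · exact .head ⟨g12, hi, h2⟩ (.head ⟨g20, h2, h0⟩ (.single ⟨g01, h0, hj⟩))
  · exact .single ⟨g12, hi, hj⟩
  · exact .single ⟨g20, hi, hj⟩
  · exact .head ⟨g20, hi, h0⟩ (.single ⟨g01, h0, hj⟩)
  · exact .head ⟨g20, hi, h0⟩ (.head ⟨g01, h0, h1⟩ (.single ⟨g12, h1, hj⟩))

/-! disjointness of class finsets -/

lemma djZB : Disjoint (fsZ k f) (fsB k f) := by
  rw [Finset.disjoint_left]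
  intro v hv hv'
  rw [mem_fsZ] at hv; rw [mem_fsB] at hv'
  obtain ⟨z, rfl⟩ := hv; obtain ⟨m, hm⟩ := hv'
  simp [vZ, vB] at hm

lemma djZC : Disjoint (fsZ k f) (fsC k f) := by
  rw [Finset.disjoint_left]
  intro v hv hv'
  rw [mem_fsZ] at hv; rw [mem_fsC] at hv'
  obtain ⟨z, rfl⟩ := hv; obtain ⟨m, hm⟩ := hv'
  simp [vZ, vC] at hm

lemma djZA : Disjoint (fsZ k f) (fsA k f) := by
  rw [Finset.disjoint_left]
  intro v hv hv'
  rw [mem_fsZ] at hv; rw [mem_fsA] at hv'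
  obtain ⟨z, rfl⟩ := hv; obtain ⟨m, hm⟩ := hv'
  simp [vZ, vA] at hm

lemma djZE : Disjoint (fsZ k f) (fsE k f) := by
  rw [Finset.disjoint_left]
  intro v hv hv'
  rw [mem_fsZ] at hv; rw [mem_fsE] at hv'
  obtain ⟨z, rfl⟩ := hv; obtain ⟨m, hm⟩ := hv'
  simp [vZ, vE] at hm

lemma djBC : Disjoint (fsB k f) (fsC k f) := by
  rw [Finset.disjoint_left]
  intro v hv hv'
  rw [mem_fsB] at hv; rw [mem_fsC] at hv'
  obtain ⟨z, rfl⟩ := hv; obtain ⟨m, hm⟩ := hv'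
  simp [vB, vC] at hm

lemma djBE : Disjoint (fsB k f) (fsE k f) := by
  rw [Finset.disjoint_left]
  intro v hv hv'
  rw [mem_fsB] at hv; rw [mem_fsE] at hv'
  obtain ⟨z, rfl⟩ := hv; obtain ⟨m, hm⟩ := hv'
  simp [vB, vE] at hm

lemma djCE : Disjoint (fsC k f) (fsE k f) := by
  rw [Finset.disjoint_left]
  intro v hv hv'
  rw [mem_fsC] at hv; rw [mem_fsE] at hv'
  obtain ⟨z, rfl⟩ := hv; obtain ⟨m, hm⟩ := hv'
  simp [vC, vE] at hm

lemma djAB : Disjoint (fsA k f) (fsB k f) := by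
  rw [Finset.disjoint_left]
  intro v hv hv'
  rw [mem_fsA] at hv; rw [mem_fsB] at hv'
  obtain ⟨z, rfl⟩ := hv; obtain ⟨m, hm⟩ := hv'
  simp [vA, vB] at hm

lemma djAC : Disjoint (fsA k f) (fsC k f) := by
  rw [Finset.disjoint_left]
  intro v hv hv'
  rw [mem_fsA] at hv; rw [mem_fsC] at hv'
  obtain ⟨z, rfl⟩ := hv; obtain ⟨m, hm⟩ := hv'
  simp [vA, vC] at hm

/-! ### escape -/

lemma escape (hk : 3 ≤ k) (hS : S.ncard ≤ 5*k-2)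
    (h0 : vT 0 i0 ∉ S) (h1 : vT 1 i1 ∉ S) (h2 : vT 2 i2 ∉ S) :
    ∀ w, w ∉ S → RTG k f S w (vT 1 i1) := by
  rintro (⟨c, i⟩ | (z | ((m | m) | (m | m)))) hw
  · exact travel S h0 h1 h2 c i hw 1 i1 h1
  · exact .single ⟨gZT1, hw, h1⟩
  · -- w = vA m : the interesting case
    set Tesc : Finset (V k f) :=
      fsZ k f ∪ fsB k f ∪ (fsC k f).erase (vC m) ∪ fsE k f with hTesc
    have hcard : Tesc.card = 5*k-2 := by
      rw [hTesc]
      rw [Finset.card_union_of_disjoint, Finset.card_union_of_disjoint,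
          Finset.card_union_of_disjoint djZB]
      · rw [card_fsZ, card_fsB, card_fsE, Finset.card_erase_of_mem, card_fsC]
        · omega
        · rw [mem_fsC]; exact ⟨m, rfl⟩
      · exact Finset.disjoint_union_left.mpr
          ⟨Finset.disjoint_of_subset_right (Finset.erase_subset _ _) djZC,
           Finset.disjoint_of_subset_right (Finset.erase_subset _ _) djBC⟩
      · exact Finset.disjoint_union_left.mpr
          ⟨Finset.disjoint_union_left.mpr ⟨djZE, djBE⟩,
           Finset.disjoint_of_subset_left (Finset.erase_subset _ _) djCE⟩
    by_cases hex : ∃ v ∈ Tesc, v ∉ S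
    · obtain ⟨v, hvT, hvS⟩ := hex
      rw [hTesc] at hvT
      simp only [Finset.mem_union, Finset.mem_erase] at hvT
      have hstep2 : G k f (vA m) v ∧ G k f v (vT 1 i1) := by
        rcases hvT with ((hv | hv) | ⟨hvne, hv⟩) | hv
        · obtain ⟨z, rfl⟩ := (mem_fsZ _).mp hv; exact ⟨gAZ, gZT1⟩
        · obtain ⟨m', rfl⟩ := (mem_fsB _).mp hv; exact ⟨gAB, gBT1⟩
        · obtain ⟨m', rfl⟩ := (mem_fsC _).mp hv
          have : m ≠ m' := by rintro rfl; exact hvne rfl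
          exact ⟨gAC this, gCT1⟩
        · obtain ⟨m', rfl⟩ := (mem_fsE _).mp hv; exact ⟨gAE, gET⟩
      exact .head ⟨hstep2.1, hw, hvS⟩ (.single ⟨hstep2.2, hvS, h1⟩)
    · push_neg at hex
      have hsub : (↑Tesc : Set (V k f)) ⊆ S := fun v hv => hex v (by exact_mod_cast hv)
      have havoid := avoid_of_subset S Tesc hsub (by omega)
      have hm' := cycSucc_spec hk m
      have hA' : vA (cycSucc m) ∉ S := by
        apply havoid
        rw [hTesc]
        simp only [Finset.mem_union, Finset.mem_erase, not_or]
        refine ⟨⟨⟨?_, ?_⟩, ?_⟩, ?_⟩ <;>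
          simp only [mem_fsZ, mem_fsB, mem_fsC, mem_fsE, not_exists] <;>
          first
            | (intro x; simp [vA, vZ, vB, vC, vE])
            | (intro h; exact absurd h.2 (by simp [vA, vZ, vB, vC, vE]))
      have hC : vC m ∉ S := by
        apply havoid
        rw [hTesc]
        simp only [Finset.mem_union, Finset.mem_erase, not_or]
        constructor
        · constructor
          · constructor <;> simp only [mem_fsZ, mem_fsB, not_exists] <;>
              intro x <;> simp [vC, vZ, vB]
          · intro h; exact absurd rfl h.1.elim
        · simp only [mem_fsE, not_exists]; intro x; simp [vC, vE]
      exact .head ⟨gAA hm'.1, hw, hA'⟩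
        (.head ⟨gAC hm'.2, hA', hC⟩ (.single ⟨gCT1, hC, h1⟩))
  · exact .single ⟨gBT1, hw, h1⟩
  · exact .single ⟨gCT1, hw, h1⟩
  · exact .single ⟨gET, hw, h1⟩

end Conn


section Conn2

variable (S : Set (V k f)) {i0 i1 i2 : Fin f}

lemma entry (hk : 3 ≤ k) (hS : S.ncard ≤ 5*k-2)
    (h0 : vT 0 i0 ∉ S) (h1 : vT 1 i1 ∉ S) (h2 : vT 2 i2 ∉ S) :
    ∀ b, b ∉ S → RTG k f S (vT 0 i0) b := by
  rintro (⟨c, i⟩ | (z | ((m | m) | (m | m)))) hb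
  · exact travel S h0 h1 h2 0 i0 h0 c i hb
  · exact .single ⟨gT0Z, h0, hb⟩
  · exact .single ⟨gTA, h0, hb⟩
  · exact .single ⟨gT0B, h0, hb⟩
  · exact .single ⟨gT0C, h0, hb⟩
  · -- b = vE m : the interesting case
    set Tent : Finset (V k f) :=
      fsZ k f ∪ fsA k f ∪ (fsB k f).erase (vB m) ∪ fsC k f with hTent
    have hcard : Tent.card = 5*k-2 := by
      rw [hTent]
      rw [Finset.card_union_of_disjoint, Finset.card_union_of_disjoint,
          Finset.card_union_of_disjoint djZA]
      · rw [card_fsZ, card_fsA, card_fsC, Finset.card_erase_of_mem, card_fsB]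
        · omega
        · rw [mem_fsB]; exact ⟨m, rfl⟩
      · exact Finset.disjoint_union_left.mpr
          ⟨Finset.disjoint_of_subset_right (Finset.erase_subset _ _) djZB,
           Finset.disjoint_of_subset_right (Finset.erase_subset _ _) djAB⟩
      · exact Finset.disjoint_union_left.mpr
          ⟨Finset.disjoint_union_left.mpr ⟨djZC, djAC⟩,
           Finset.disjoint_of_subset_left (Finset.erase_subset _ _) djBC⟩
    by_cases hex : ∃ v ∈ Tent, v ∉ S
    · obtain ⟨v, hvT, hvS⟩ := hex
      rw [hTent] at hvT
      simp only [Finset.mem_union, Finset.mem_erase] at hvT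
      have hstep2 : G k f (vT 0 i0) v ∧ G k f v (vE m) := by
        rcases hvT with ((hv | hv) | ⟨hvne, hv⟩) | hv
        · obtain ⟨z, rfl⟩ := (mem_fsZ _).mp hv; exact ⟨gT0Z, gZE⟩
        · obtain ⟨m', rfl⟩ := (mem_fsA _).mp hv; exact ⟨gTA, gAE⟩
        · obtain ⟨m', rfl⟩ := (mem_fsB _).mp hv
          have : m' ≠ m := by rintro rfl; exact hvne rfl
          exact ⟨gT0B, gBE this⟩
        · obtain ⟨m', rfl⟩ := (mem_fsC _).mp hv; exact ⟨gT0C, gCE⟩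
      exact .head ⟨hstep2.1, h0, hvS⟩ (.single ⟨hstep2.2, hvS, hb⟩)
    · push_neg at hex
      have hsub : (↑Tent : Set (V k f)) ⊆ S := fun v hv => hex v (by exact_mod_cast hv)
      have havoid := avoid_of_subset S Tent hsub (by omega)
      have hm' := cycPred_spec hk m
      have hB : vB m ∉ S := by
        apply havoid
        rw [hTent]
        simp only [Finset.mem_union, Finset.mem_erase, not_or]
        constructor
        · constructor
          · constructor <;> simp only [mem_fsZ, mem_fsA, not_exists] <;>
              intro x <;> simp [vB, vZ, vA]
          · intro h; exact absurd rfl h.1.elim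
        · simp only [mem_fsC, not_exists]; intro x; simp [vB, vC]
      have hE' : vE (cycPred m) ∉ S := by
        apply havoid
        rw [hTent]
        simp only [Finset.mem_union, Finset.mem_erase, not_or]
        refine ⟨⟨⟨?_, ?_⟩, ?_⟩, ?_⟩ <;>
          simp only [mem_fsZ, mem_fsA, mem_fsB, mem_fsC, not_exists] <;>
          first
            | (intro x; simp [vE, vZ, vA, vB, vC])
            | (intro h; exact absurd h.2 (by simp [vE, vZ, vA, vB, vC]))
      have hnepred : m ≠ cycPred m := Ne.symm hm'.2
      exact .head ⟨gT0B, h0, hB⟩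
        (.head ⟨gBE (Ne.symm hm'.2), hB, hE'⟩ (.single ⟨gEE hm'.1, hE', hb⟩))

lemma connV (hk : 3 ≤ k) (hf : 5*k ≤ f) (hS : S.ncard ≤ 5*k-2)
    (a b : V k f) (ha : a ∉ S) (hb : b ∉ S) :
    ∃ p : List (V k f), (p ≠ [] ∧ p.Nodup ∧ p.Chain' (G k f)) ∧ p.head? = some a ∧
      p.getLast? = some b ∧ ∀ v ∈ p, v ∉ S := by
  have hfS : ∀ c : Fin 3, ∃ i : Fin f, vT c i ∉ S := by
    intro c
    obtain ⟨v, hvT, hvS⟩ := exists_avoid S (fsT k f c) (by rw [card_fsT]; omega)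
    rw [mem_fsT] at hvT
    obtain ⟨i, rfl⟩ := hvT
    exact ⟨i, hvS⟩
  obtain ⟨i0, h0⟩ := hfS 0
  obtain ⟨i1, h1⟩ := hfS 1
  obtain ⟨i2, h2⟩ := hfS 2
  have hRTG : RTG k f S a b :=
    ((escape S hk hS h0 h1 h2 a ha).trans
      (travel S h0 h1 h2 1 i1 h1 0 i0 h0)).trans
      (entry S hk hS h0 h1 h2 b hb)
  obtain ⟨l, hne, hchain, hh, hl, hP⟩ :=
    rtg_walk (r := step k f S) (P := fun v => v ∉ S) (fun hxy => hxy.2.2) hRTG ha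
  obtain ⟨q, hqne, hqnd, hqc, hqh, hql, hqm⟩ := walk_dedup l hne hchain
  refine ⟨q, ⟨hqne, hqnd, hqc.imp (fun _ _ h => h.1)⟩, ?_, ?_, ?_⟩
  · rw [hqh, hh]
  · rw [hql, hl]
  · intro v hv; exact hP v (hqm v hv)

end Conn2


/-! ### non-linkage -/

section ListHelpers

variable {α : Type*} {r : α → α → Prop}

lemma two_le_length {l : List α} {u w : α} (hh : l.head? = some u) (hl : l.getLast? = some w)
    (hne : u ≠ w) : 2 ≤ l.length := by
  rcases l with _ | ⟨x, _ | ⟨y, ys⟩⟩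
  · simp at hh
  · simp only [List.head?_cons, Option.some.injEq] at hh
    simp only [List.getLast?_singleton, Option.some.injEq] at hl
    exact absurd (hh ▸ hl ▸ rfl) hne
  · simp only [List.length_cons]; omega

lemma second_of {l : List α} {u w : α} (hh : l.head? = some u) (hl : l.getLast? = some w)
    (hne : u ≠ w) (hc : l.Chain' r) : ∃ v ∈ l, r u v := by
  have h2 := two_le_length hh hl hne
  rcases l with _ | ⟨x, _ | ⟨y, ys⟩⟩
  · simp at hh
  · simp at h2
  · simp only [List.head?_cons, Option.some.injEq] at hh
    subst hh
    exact ⟨y, by simp, (List.isChain_cons_cons.mp hc).1⟩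

lemma penult_of : ∀ (l : List α) (w : α), l.getLast? = some w → 2 ≤ l.length →
    l.Chain' r → ∃ v ∈ l, r v w := by
  intro l
  induction l with
  | nil => simp
  | cons x xs ih =>
    intro w hl hlen hc
    rcases xs with _ | ⟨y, ys⟩
    · simp at hlen
    · rcases ys with _ | ⟨t, ts⟩
      · simp only [List.getLast?_cons_cons, List.getLast?_singleton, Option.some.injEq] at hl
        subst hl
        exact ⟨x, by simp, (List.isChain_cons_cons.mp hc).1⟩
      · obtain ⟨v, hv, hr⟩ := ih w (by simpa [List.getLast?_cons_cons] using hl)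
          (by simp) (List.isChain_cons_cons.mp hc).2
        exact ⟨v, List.mem_cons_of_mem _ hv, hr⟩

end ListHelpers

variable (k f) in
def xfun (i : Fin (2*k)) : V k f :=
  if h : i.val < k then vA ⟨i.val, h⟩ else vB ⟨i.val - k, by have := i.isLt; omega⟩

variable (k f) in
def yfun (i : Fin (2*k)) : V k f :=
  if h : i.val < k then vC ⟨i.val, h⟩ else vE ⟨i.val - k, by have := i.isLt; omega⟩

lemma nolinkV (hk : 3 ≤ k) :
    ¬ (∃ P : Fin (2*k) → List (V k f),
        (∀ i, IsDipath (G k f) (P i) ∧ (P i).head? = some (xfun k f i) ∧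
          (P i).getLast? = some (yfun k f i)) ∧
        ∀ i j, i ≠ j → ∀ v ∈ P i, v ∉ P j) := by
  rintro ⟨P, hP, hdisj⟩
  have hterm_x : ∀ j : Fin (2*k), xfun k f j ∈ P j := fun j =>
    List.mem_of_mem_head? (by rw [(hP j).2.1]; rfl)
  have hterm_y : ∀ j : Fin (2*k), yfun k f j ∈ P j := fun j =>
    List.mem_of_mem_getLast? (by rw [(hP j).2.2]; rfl)
  have hz : ∀ i : Fin (2*k), ∃ z : Fin (2*k-1), vZ z ∈ P i := by
    intro i
    obtain ⟨⟨hne, hnd, hch⟩, hh, hl⟩ := hP i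
    have hi2k := i.isLt
    by_cases hik : i.val < k
    · -- source pair : second vertex must be in Z
      have hxeq : xfun k f i = vA ⟨i.val, hik⟩ := by rw [xfun, dif_pos hik]
      have hxy : xfun k f i ≠ yfun k f i := by
        rw [hxeq, yfun, dif_pos hik]; simp [vA, vC]
      obtain ⟨v, hvmem, hgv⟩ := second_of hh hl hxy hch
      rw [hxeq] at hgv
      rcases v with (⟨c, t⟩ | (z | ((m' | m') | (m' | m')))) <;>
        [skip; exact ⟨z, hvmem⟩; skip; skip; skip; skip]
      · -- v in T : impossible
        simp [G, vA] at hgv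
      · -- v = vA m'
        have hm' : (⟨i.val, hik⟩ : Fin k) ≠ m' := by
          rintro rfl; exact cyc_irrefl (k := k) (by omega) _ (by simpa [G, vA] using hgv)
        obtain ⟨j, hjval⟩ : ∃ j : Fin (2*k), j.val = m'.val :=
          ⟨⟨m'.val, by have := m'.isLt; omega⟩, rfl⟩
        have hij : i ≠ j := by
          intro h
          have h2 := congrArg Fin.val h
          exact hm' (Fin.ext (show i.val = m'.val by omega))
        have hxj : xfun k f j = vA m' := by
          have hjk : j.val < k := by have := m'.isLt; omega
          rw [xfun, dif_pos hjk]
          congr 1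
          exact Fin.ext hjval
        have hmem : vA m' ∈ P j := by rw [← hxj]; exact hterm_x j
        exact absurd hmem (hdisj i j hij _ hvmem)
      · -- v = vB m'
        obtain ⟨j, hjval⟩ : ∃ j : Fin (2*k), j.val = k + m'.val :=
          ⟨⟨k + m'.val, by have := m'.isLt; omega⟩, rfl⟩
        have hij : i ≠ j := by intro h; rw [h] at hik; omega
        have hxj : xfun k f j = vB m' := by
          rw [xfun, dif_neg (show ¬ j.val < k by omega)]
          congr 1
          exact Fin.ext (show j.val - k = m'.val by omega)
        have hmem : vB m' ∈ P j := by rw [← hxj]; exact hterm_x j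
        exact absurd hmem (hdisj i j hij _ hvmem)
      · -- v = vC m'
        have hm' : (⟨i.val, hik⟩ : Fin k) ≠ m' := by simpa [G, vA, vC] using hgv
        obtain ⟨j, hjval⟩ : ∃ j : Fin (2*k), j.val = m'.val :=
          ⟨⟨m'.val, by have := m'.isLt; omega⟩, rfl⟩
        have hij : i ≠ j := by
          intro h
          have h2 := congrArg Fin.val h
          exact hm' (Fin.ext (show i.val = m'.val by omega))
        have hyj : yfun k f j = vC m' := by
          have hjk : j.val < k := by have := m'.isLt; omega
          rw [yfun, dif_pos hjk]
          congr 1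
          exact Fin.ext hjval
        have hmem : vC m' ∈ P j := by rw [← hyj]; exact hterm_y j
        exact absurd hmem (hdisj i j hij _ hvmem)
      · -- v = vE m'
        obtain ⟨j, hjval⟩ : ∃ j : Fin (2*k), j.val = k + m'.val :=
          ⟨⟨k + m'.val, by have := m'.isLt; omega⟩, rfl⟩
        have hij : i ≠ j := by intro h; rw [h] at hik; omega
        have hyj : yfun k f j = vE m' := by
          rw [yfun, dif_neg (show ¬ j.val < k by omega)]
          congr 1
          exact Fin.ext (show j.val - k = m'.val by omega)
        have hmem : vE m' ∈ P j := by rw [← hyj]; exact hterm_y j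
        exact absurd hmem (hdisj i j hij _ hvmem)
    · -- sink pair : penultimate vertex must be in Z
      have hyeq : yfun k f i = vE ⟨i.val - k, by omega⟩ := by rw [yfun, dif_neg hik]
      have hxy : xfun k f i ≠ yfun k f i := by
        rw [hyeq, xfun, dif_neg hik]; simp [vB, vE]
      obtain ⟨v, hvmem, hgv⟩ := penult_of _ _ hl (two_le_length hh hl hxy) hch
      rw [hyeq] at hgv
      rcases v with (⟨c, t⟩ | (z | ((m' | m') | (m' | m')))) <;>
        [skip; exact ⟨z, hvmem⟩; skip; skip; skip; skip]
      · -- v in T : impossible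
        simp [G, vE] at hgv
      · -- v = vA m'
        obtain ⟨j, hjval⟩ : ∃ j : Fin (2*k), j.val = m'.val :=
          ⟨⟨m'.val, by have := m'.isLt; omega⟩, rfl⟩
        have hij : i ≠ j := by
          intro h
          have h2 := congrArg Fin.val h
          have := m'.isLt
          omega
        have hxj : xfun k f j = vA m' := by
          have hjk : j.val < k := by have := m'.isLt; omega
          rw [xfun, dif_pos hjk]
          congr 1
          exact Fin.ext hjval
        have hmem : vA m' ∈ P j := by rw [← hxj]; exact hterm_x j
        exact absurd hmem (hdisj i j hij _ hvmem)
      · -- v = vB m'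
        have hm' : m' ≠ (⟨i.val - k, by omega⟩ : Fin k) := by simpa [G, vB, vE] using hgv
        obtain ⟨j, hjval⟩ : ∃ j : Fin (2*k), j.val = k + m'.val :=
          ⟨⟨k + m'.val, by have := m'.isLt; omega⟩, rfl⟩
        have hij : i ≠ j := by
          intro h
          have h2 := congrArg Fin.val h
          exact hm' (Fin.ext (show m'.val = i.val - k by omega))
        have hxj : xfun k f j = vB m' := by
          rw [xfun, dif_neg (show ¬ j.val < k by omega)]
          congr 1
          exact Fin.ext (show j.val - k = m'.val by omega)
        have hmem : vB m' ∈ P j := by rw [← hxj]; exact hterm_x j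
        exact absurd hmem (hdisj i j hij _ hvmem)
      · -- v = vC m'
        obtain ⟨j, hjval⟩ : ∃ j : Fin (2*k), j.val = m'.val :=
          ⟨⟨m'.val, by have := m'.isLt; omega⟩, rfl⟩
        have hij : i ≠ j := by
          intro h
          have h2 := congrArg Fin.val h
          have := m'.isLt
          omega
        have hyj : yfun k f j = vC m' := by
          have hjk : j.val < k := by have := m'.isLt; omega
          rw [yfun, dif_pos hjk]
          congr 1
          exact Fin.ext hjval
        have hmem : vC m' ∈ P j := by rw [← hyj]; exact hterm_y j
        exact absurd hmem (hdisj i j hij _ hvmem)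
      · -- v = vE m'
        have hm' : m' ≠ (⟨i.val - k, by omega⟩ : Fin k) := by
          rintro rfl; exact cyc_irrefl (k := k) (by omega) _ (by simpa [G, vE] using hgv)
        obtain ⟨j, hjval⟩ : ∃ j : Fin (2*k), j.val = k + m'.val :=
          ⟨⟨k + m'.val, by have := m'.isLt; omega⟩, rfl⟩
        have hij : i ≠ j := by
          intro h
          have h2 := congrArg Fin.val h
          exact hm' (Fin.ext (show m'.val = i.val - k by omega))
        have hyj : yfun k f j = vE m' := by
          rw [yfun, dif_neg (show ¬ j.val < k by omega)]
          congr 1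
          exact Fin.ext (show j.val - k = m'.val by omega)
        have hmem : vE m' ∈ P j := by rw [← hyj]; exact hterm_y j
        exact absurd hmem (hdisj i j hij _ hvmem)
  choose zf hzf using hz
  have hinj : Function.Injective zf := by
    intro i j hij
    by_contra hnex
    exact (hdisj i j hnex (vZ (zf i)) (hzf i)) (by rw [hij]; exact hzf j)
  have hcard := Fintype.card_le_of_injective zf hinj
  simp only [Fintype.card_fin] at hcard
  omega


lemma xyinj (hk : 3 ≤ k) : Function.Injective (Sum.elim (xfun k f) (yfun k f)) := by
  have hx : ∀ i j : Fin (2*k), xfun k f i = xfun k f j → i = j := by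
    intro i j hst
    by_cases hi : i.val < k <;> by_cases hj : j.val < k <;>
      simp only [xfun, hi, hj, dite_true, dite_false] at hst <;>
      simp only [vA, vB, Sum.inr.injEq, Sum.inl.injEq, Fin.mk.injEq, reduceCtorEq] at hst <;>
      first
        | exact Fin.ext hst
        | (have h1 := i.isLt; have h2 := j.isLt; exact Fin.ext (by omega))
  have hy : ∀ i j : Fin (2*k), yfun k f i = yfun k f j → i = j := by
    intro i j hst
    by_cases hi : i.val < k <;> by_cases hj : j.val < k <;>
      simp only [yfun, hi, hj, dite_true, dite_false] at hst <;>
      simp only [vC, vE, Sum.inr.injEq, Sum.inl.injEq, Fin.mk.injEq, reduceCtorEq] at hst <;>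
      first
        | exact Fin.ext hst
        | (have h1 := i.isLt; have h2 := j.isLt; exact Fin.ext (by omega))
  have hxy : ∀ i j : Fin (2*k), xfun k f i ≠ yfun k f j := by
    intro i j
    by_cases hi : i.val < k <;> by_cases hj : j.val < k <;>
      simp [xfun, yfun, hi, hj, vA, vB, vC, vE]
  intro s t hst
  rcases s with i | i <;> rcases t with j | j <;>
    simp only [Sum.elim_inl, Sum.elim_inr] at hst
  · rw [hx i j hst]
  · exact absurd hst (hxy i j)
  · exact absurd hst.symm (hxy j i)
  · rw [hy i j hst]



end FiveK

open FiveK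

/-- For every `k ≥ 3` there exist tournaments on arbitrarily many vertices that are strongly
`(5k-1)`-connected but are not `2k`-linked. -/
theorem exists_five_k_connected_not_two_k_linked (k : ℕ) (hk : 3 ≤ k) (N : ℕ) :
    ∃ n : ℕ, N ≤ n ∧ ∃ G : Fin n → Fin n → Prop,
      IsTournament G ∧ StronglyKConnected G (5 * k - 1) ∧ ¬ KLinked G (2 * k) := by
  set f := N + 5 * k with hfdef
  have hf5 : 5 * k ≤ f := by omega
  set n := 3 * f + (2*k-1) + 4*k with hndef
  have hcardV : Fintype.card (V k f) = n := by
    simp only [V, Fintype.card_sum, Fintype.card_prod, Fintype.card_fin]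
    omega
  have e : V k f ≃ Fin n := Fintype.equivFinOfCardEq hcardV
  refine ⟨n, by omega, fun u v => G k f (e.symm u) (e.symm v), ?_, ?_, ?_⟩
  · -- tournament
    obtain ⟨h1, h2⟩ := tournament (k := k) (f := f) (by omega)
    constructor
    · intro v; exact h1 _
    · intro x y hxy
      refine h2 _ _ (fun h => hxy ?_)
      have := congrArg e h
      simpa using this
  · constructor
    · simp only [Fintype.card_fin]; omega
    · intro S' hS' x y hx hy hxy
      set S : Set (V k f) := (⇑e) ⁻¹' S' with hSdef
      have hScard : S.ncard ≤ 5*k-2 := by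
        have himg : (⇑e) '' S = S' := Set.image_preimage_eq S' e.surjective
        have h2 := Set.ncard_image_of_injective S e.injective
        rw [himg] at h2
        omega
      have ha : e.symm x ∉ S := by
        rw [hSdef]
        simp only [Set.mem_preimage, Equiv.apply_symm_apply]
        exact hx
      have hb : e.symm y ∉ S := by
        rw [hSdef]
        simp only [Set.mem_preimage, Equiv.apply_symm_apply]
        exact hy
      obtain ⟨p, ⟨hpne, hpnd, hpch⟩, hph, hpl, hpS⟩ :=
        connV S hk hf5 hScard (e.symm x) (e.symm y) ha hb
      refine ⟨p.map e, ⟨?_, hpnd.map e.injective, ?_⟩, ?_, ?_, ?_⟩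
      · simpa using hpne
      · refine (List.isChain_map _).mpr (hpch.imp (fun a b hab => ?_))
        simpa using hab
      · rw [List.head?_map, hph]; simp
      · rw [List.getLast?_map, hpl]; simp
      · intro v hv
        obtain ⟨w, hw, rfl⟩ := List.mem_map.mp hv
        intro hvS'
        exact hpS w hw (by rw [hSdef]; exact hvS')
  · rintro ⟨-, hlink⟩
    obtain ⟨P', hP', hdisj'⟩ := hlink (fun i => e (xfun k f i)) (fun i => e (yfun k f i))
      (by
        have : (Sum.elim (fun i => e (xfun k f i)) (fun i => e (yfun k f i)) :
            Fin (2*k) ⊕ Fin (2*k) → Fin n) = ⇑e ∘ Sum.elim (xfun k f) (yfun k f) := by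
          rw [Sum.comp_elim]; rfl
        rw [this]
        exact e.injective.comp (xyinj hk))
    apply nolinkV (f := f) hk
    refine ⟨fun i => (P' i).map e.symm, ?_, ?_⟩
    · intro i
      obtain ⟨⟨hne, hnd, hch⟩, hh, hl⟩ := hP' i
      refine ⟨⟨by simpa using hne, hnd.map e.symm.injective, ?_⟩, ?_, ?_⟩
      · exact (List.isChain_map _).mpr hch
      · rw [List.head?_map, hh]; simp
      · rw [List.getLast?_map, hl]; simp
    · intro i j hij v hvi hvj
      obtain ⟨w, hw, rfl⟩ := List.mem_map.mp hvi
      obtain ⟨w', hw', hww⟩ := List.mem_map.mp hvj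
      have hwe : w' = w := e.symm.injective hww
      rw [hwe] at hw'
      exact hdisj' i j hij w hw hw'
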